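/- Let D be a positive integer and p(t) = (t², t^{2D}). Then p(t) ∈ H = {(x,y) : 0 ≤ x ≤ 1, x^D ≤ y ≤ 2x^D} for all t with |t| ≤ 1, and the function t ↦ exp(−1/(t⁴(1 + t^{4(D−1)}))) for t ≠ 0, extended by 0 at t = 0, has no real analytic extension at t = 0. -/

import Mathlib

open Real Filter Topology

/-- the curve `p(t) = (t², t^{2D})` lies in the horn
`H = {(x,y) : 0 ≤ x ≤ 1, x^D ≤ y ≤ 2x^D}` for `|t| ≤ 1`, and the composite
`t ↦ exp(−1/(t⁴(1 + t^{4(D−1)})))` (extended by `0` at `t = 0`) is not real analytic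
at `0`. -/
theorem stmt12 (D : ℕ) (hD : 0 < D) :
    (∀ t : ℝ, |t| ≤ 1 →
      0 ≤ (t ^ 2 : ℝ) ∧ t ^ 2 ≤ 1 ∧
      (t ^ 2) ^ D ≤ t ^ (2 * D) ∧ t ^ (2 * D) ≤ 2 * (t ^ 2) ^ D) ∧
    ¬ AnalyticAt ℝ (fun t : ℝ =>
      if t = 0 then 0 else Real.exp (-1 / (t ^ 4 * (1 + t ^ (4 * (D - 1)))))) 0 := by
  set f : ℝ → ℝ := fun t : ℝ =>
      if t = 0 then 0 else Real.exp (-1 / (t ^ 4 * (1 + t ^ (4 * (D - 1))))) with hf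
  constructor
  · intro t ht
    have h1 : t ^ 2 ≤ 1 := by
      have : |t| ^ 2 ≤ 1 := pow_le_one₀ (abs_nonneg t) ht
      calc t ^ 2 = |t| ^ 2 := (sq_abs t).symm
        _ ≤ 1 := this
    have h2 : (t ^ 2) ^ D = t ^ (2 * D) := (pow_mul t 2 D).symm
    have h3 : (0:ℝ) ≤ (t ^ 2) ^ D := pow_nonneg (sq_nonneg t) D
    exact ⟨sq_nonneg t, h1, h2.le, by linarith [h2]⟩
  · intro h
    -- the order of `f` at 0
    rcases eq_or_ne (analyticOrderAt f 0) ⊤ with hord | hord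
    · -- eventually zero case: impossible since f > 0 off 0
      have hev : ∀ᶠ z in 𝓝 (0:ℝ), f z = 0 := analyticOrderAt_eq_top.mp hord
      have h2 : ∀ᶠ t in 𝓝[≠] (0:ℝ), f t = 0 ∧ t ≠ 0 :=
        (hev.filter_mono nhdsWithin_le_nhds).and eventually_mem_nhdsWithin
      obtain ⟨t, htf, ht0⟩ := h2.exists
      rw [hf] at htf
      simp only [if_neg ht0] at htf
      exact (Real.exp_pos _).ne' htf
    · obtain ⟨n, hn⟩ : ∃ n : ℕ, analyticOrderAt f 0 = n := by
        lift (analyticOrderAt f 0) to ℕ using hord with n hn; exact ⟨n, rfl⟩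
      obtain ⟨g, hg, hg0, hev⟩ := (h.analyticOrderAt_eq_natCast (n := n)).mp hn
      -- show g 0 = 0, contradiction
      set m : ℕ := n + 1 with hm
      -- bound eventually on punctured nbhd
      have habs : ∀ᶠ t in 𝓝 (0:ℝ), |t| < 1 := by
        have : Continuous fun t : ℝ => |t| := continuous_abs
        have := this.tendsto 0
        simp only [abs_zero] at this
        exact this.eventually_lt_const one_pos
      have hbd : ∀ᶠ t in 𝓝[≠] (0:ℝ),
          ‖f t / t ^ n‖ ≤ (m.factorial : ℝ) * 2 ^ m * |t| ^ (3 * n + 4) := by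
        filter_upwards [habs.filter_mono nhdsWithin_le_nhds,
          eventually_mem_nhdsWithin] with t ht1 ht0
        have ht0' : t ≠ 0 := ht0
        have t4pos : (0:ℝ) < t ^ 4 := by positivity
        have hEven : Even (4 * (D - 1)) := ⟨2 * (D - 1), by ring⟩
        have hp : (0:ℝ) ≤ t ^ (4 * (D - 1)) := hEven.pow_nonneg t
        have hple1 : t ^ (4 * (D - 1)) ≤ 1 := by
          calc t ^ (4 * (D - 1)) ≤ |t ^ (4 * (D - 1))| := le_abs_self _
            _ = |t| ^ (4 * (D - 1)) := abs_pow t _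
            _ ≤ 1 := pow_le_one₀ (abs_nonneg t) ht1.le
        set d : ℝ := t ^ 4 * (1 + t ^ (4 * (D - 1))) with hd
        have hd_pos : 0 < d := by positivity
        have hd_le : d ≤ 2 * t ^ 4 := by nlinarith
        have hx : (0:ℝ) < 1 / (2 * t ^ 4) := by positivity
        have key : Real.exp (-1 / d) ≤ (m.factorial : ℝ) * 2 ^ m * |t| ^ (4 * m) := by
          calc Real.exp (-1 / d) ≤ Real.exp (-(1 / (2 * t ^ 4))) := by
                rw [Real.exp_le_exp, neg_div]
                exact neg_le_neg (one_div_le_one_div_of_le hd_pos hd_le)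
            _ = (Real.exp (1 / (2 * t ^ 4)))⁻¹ := by rw [Real.exp_neg]
            _ ≤ ((1 / (2 * t ^ 4)) ^ m / (m.factorial : ℝ))⁻¹ := by
                apply inv_anti₀ (by positivity)
                exact Real.pow_div_factorial_le_exp _ hx.le m
            _ = (m.factorial : ℝ) * (2 * t ^ 4) ^ m := by
                rw [inv_div, one_div, inv_pow, div_inv_eq_mul]
            _ = (m.factorial : ℝ) * 2 ^ m * |t| ^ (4 * m) := by
                have h4 : |t| ^ (4 * m) = (t ^ 4) ^ m := by
                  rw [show (4:ℕ) * m = m * 4 by ring, pow_mul', ← abs_pow,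
                    abs_of_nonneg t4pos.le]
                rw [h4, mul_pow]; ring
        have hfe : f t = Real.exp (-1 / d) := by rw [hf]; simp [if_neg ht0']; rfl
        have habsn : (0:ℝ) < |t| ^ n := by positivity
        have : ‖f t / t ^ n‖ = Real.exp (-1 / d) / |t| ^ n := by
          rw [norm_div, hfe, Real.norm_eq_abs, Real.norm_eq_abs,
            abs_of_pos (Real.exp_pos _), abs_pow]
        rw [this]
        rw [div_le_iff₀ habsn]
        calc Real.exp (-1 / d) ≤ (m.factorial : ℝ) * 2 ^ m * |t| ^ (4 * m) := key
          _ = (m.factorial : ℝ) * 2 ^ m * |t| ^ (3 * n + 4) * |t| ^ n := by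
              rw [show 4 * m = 3 * n + 4 + n by omega, pow_add]; ring
      -- the bound tends to 0
      have hbd0 : Tendsto (fun t : ℝ => (m.factorial : ℝ) * 2 ^ m * |t| ^ (3 * n + 4))
          (𝓝[≠] (0:ℝ)) (𝓝 0) := by
        have hc : Continuous fun t : ℝ => (m.factorial : ℝ) * 2 ^ m * |t| ^ (3 * n + 4) := by
          continuity
        have := hc.tendsto 0
        simp only [abs_zero, zero_pow (by omega : 3 * n + 4 ≠ 0), mul_zero] at this
        exact this.mono_left nhdsWithin_le_nhds
      have htend : Tendsto (fun t : ℝ => f t / t ^ n) (𝓝[≠] (0:ℝ)) (𝓝 0) :=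
        squeeze_zero_norm' hbd hbd0
      have heq : ∀ᶠ t in 𝓝[≠] (0:ℝ), f t / t ^ n = g t := by
        filter_upwards [hev.filter_mono nhdsWithin_le_nhds,
          eventually_mem_nhdsWithin] with t htf ht0
        have ht0' : (t:ℝ) ≠ 0 := ht0
        rw [htf]
        simp only [sub_zero, smul_eq_mul]
        field_simp
      have hgtend : Tendsto g (𝓝[≠] (0:ℝ)) (𝓝 (g 0)) :=
        (hg.continuousAt.tendsto).mono_left nhdsWithin_le_nhds
      have : g 0 = 0 := tendsto_nhds_unique hgtend (htend.congr' heq)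
      exact hg0 this
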